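/- Let q > 2 be a prime power and let s, t, t' be natural numbers with t, t' ≥ 1, gcd(s,t) = 1 and gcd(s,t') = 1. Then the toric codes C_{P^{(2,1)}(s,t)} and C_{P^{(2,1)}(s,t')} over 𝔽_q are monomially equivalent if and only if gcd(t, q−1) = gcd(t', q−1). -/

import Mathlib

section Counting

variable {F : Type} [Field F]

/-- Solving `a*x + g(rest) = 0` for `x`. -/
lemma card_scaled {α : Type} (a : F) (ha : a ≠ 0) (g : α → F) :
    Nat.card {p : F × α // a * p.1 + g p.2 = 0} = Nat.card α := by
  refine Nat.card_congr ⟨fun p => p.1.2, fun b => ⟨(-(g b) / a, b), by field_simp; ring⟩, ?_, ?_⟩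
  · rintro ⟨⟨x, b⟩, h⟩
    apply Subtype.ext
    have hx : x = -(g b) / a := by field_simp; linear_combination h
    simp [hx]
  · intro b; rfl

lemma card_solve_first {α : Type} (g : α → F) (Q : α → Prop) :
    Nat.card {p : F × α // p.1 + g p.2 = 0 ∧ Q p.2} = Nat.card {b : α // Q b} := by
  refine Nat.card_congr ⟨fun p => ⟨p.1.2, p.2.2⟩, fun b => ⟨(-(g b.1), b.1), by ring, b.2⟩, ?_, ?_⟩
  · rintro ⟨⟨x, b⟩, h1, h2⟩
    apply Subtype.ext
    have hx : x = -(g b) := by linear_combination h1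
    simp [hx]
  · intro b; rfl

lemma card_solve_first' {α : Type} (g : α → F) :
    Nat.card {p : F × α // p.1 + g p.2 = 0} = Nat.card α := by
  have h := card_solve_first g (fun _ : α => True)
  simp only [and_true] at h
  rw [h]
  exact Nat.card_congr (Equiv.subtypeUnivEquiv fun _ => trivial)

/-- A nonzero linear equation in 4 variables has `|F|³` solutions. -/
lemma card_lin4 (a b c e : F) (h : ¬(a = 0 ∧ b = 0 ∧ c = 0 ∧ e = 0)) :
    Nat.card {p : F × F × F × F // a * p.1 + b * p.2.1 + c * p.2.2.1 + e * p.2.2.2 = 0}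
      = Nat.card (F × F × F) := by
  by_cases ha : a = 0
  · by_cases hb : b = 0
    · by_cases hc : c = 0
      · have he : e ≠ 0 := fun he => h ⟨ha, hb, hc, he⟩
        subst ha; subst hb; subst hc
        rw [← card_scaled e he (fun p : F × F × F => 0 * p.1 + 0 * p.2.1 + 0 * p.2.2)]
        refine Nat.card_congr (Equiv.subtypeEquiv
          ⟨fun p : F × F × F × F => ((p.2.2.2, p.1, p.2.1, p.2.2.1) : F × F × F × F),
           fun p => (p.2.1, p.2.2.1, p.2.2.2, p.1), fun p => rfl, fun p => rfl⟩ ?_)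
        intro p
        constructor <;> intro hh <;> linear_combination hh
      · subst ha; subst hb
        rw [← card_scaled c hc (fun p : F × F × F => 0 * p.1 + 0 * p.2.1 + e * p.2.2)]
        refine Nat.card_congr (Equiv.subtypeEquiv
          ⟨fun p : F × F × F × F => ((p.2.2.1, p.1, p.2.1, p.2.2.2) : F × F × F × F),
           fun p => (p.2.1, p.2.2.1, p.1, p.2.2.2), fun p => rfl, fun p => rfl⟩ ?_)
        intro p
        constructor <;> intro hh <;> linear_combination hh
    · subst ha
      rw [← card_scaled b hb (fun p : F × F × F => 0 * p.1 + c * p.2.1 + e * p.2.2)]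
      refine Nat.card_congr (Equiv.subtypeEquiv
        ⟨fun p : F × F × F × F => ((p.2.1, p.1, p.2.2.1, p.2.2.2) : F × F × F × F),
         fun p => (p.2.1, p.1, p.2.2.1, p.2.2.2), fun p => rfl, fun p => rfl⟩ ?_)
      intro p
      constructor <;> intro hh <;> linear_combination hh
  · rw [← card_scaled a ha (fun p : F × F × F => b * p.1 + c * p.2.1 + e * p.2.2)]
    refine Nat.card_congr (Equiv.subtypeEquivRight ?_)
    intro p
    constructor <;> intro hh <;> linear_combination hh

end Counting


lemma card_pow_eq_one {G : Type} [CommGroup G] [Finite G] [IsCyclic G] (t : ℕ) :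
    Nat.card {u : G // u ^ t = 1} = Nat.gcd t (Nat.card G) := by
  classical
  set n := Nat.card G with hn
  have hn0 : 0 < n := Nat.card_pos
  set d := Nat.gcd t n with hd
  have hdn : d ∣ n := Nat.gcd_dvd_right t n
  have hd0 : 0 < d := Nat.pos_of_dvd_of_pos hdn hn0
  have step1 : ∀ u : G, u ^ t = 1 ↔ u ^ d = 1 := by
    intro u
    constructor
    · intro h
      have h1 : orderOf u ∣ t := orderOf_dvd_of_pow_eq_one h
      have h2 : orderOf u ∣ n := by rw [hn]; exact orderOf_dvd_natCard u
      exact orderOf_dvd_iff_pow_eq_one.mp (Nat.dvd_gcd h1 h2)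
    · intro h
      have ht' : t = d * (t / d) := (Nat.mul_div_cancel' (Nat.gcd_dvd_left t n)).symm
      rw [ht', pow_mul, h, one_pow]
  obtain ⟨g, hg⟩ := IsCyclic.exists_generator (α := G)
  have hog : orderOf g = n := by
    have htop : Subgroup.zpowers g = ⊤ := by
      ext x; simp [hg x]
    rw [← Nat.card_zpowers, htop, hn]
    exact Nat.card_congr Subgroup.topEquiv.toEquiv
  set ζ := g ^ (n / d) with hζ
  have hoζ : orderOf ζ = d := by
    rw [hζ, orderOf_pow, hog]
    have h1 : Nat.gcd n (n / d) = n / d := Nat.gcd_eq_right (Nat.div_dvd_of_dvd hdn)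
    rw [h1, Nat.div_div_self hdn hn0.ne']
  have step2 : ∀ u : G, u ^ d = 1 ↔ u ∈ Subgroup.zpowers ζ := by
    intro u
    constructor
    · intro h
      obtain ⟨m, hm⟩ := hg u
      simp only at hm
      have h2 : g ^ (m * (d : ℤ)) = 1 := by rw [zpow_mul, hm, zpow_natCast, h]
      have h3 := orderOf_dvd_iff_zpow_eq_one.mpr h2
      rw [hog] at h3
      have hnd : (n : ℤ) = (n / d : ℕ) * (d : ℤ) := by
        norm_cast
        exact (Nat.div_mul_cancel hdn).symm
      rw [hnd] at h3
      have h4 : ((n / d : ℕ) : ℤ) ∣ m :=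
        (mul_dvd_mul_iff_right (by exact_mod_cast hd0.ne' : ((d : ℤ) ≠ 0))).mp h3
      obtain ⟨j, hj⟩ := h4
      refine ⟨j, ?_⟩
      simp only
      rw [hζ, ← zpow_natCast g, ← zpow_mul, ← hj, hm]
    · rintro ⟨m, rfl⟩
      simp only
      have key : (ζ ^ m) ^ (d : ℕ) = (ζ ^ (d : ℕ)) ^ m := by
        rw [← zpow_natCast, ← zpow_mul, mul_comm, zpow_mul, zpow_natCast]
      rw [key, ← hoζ, pow_orderOf_eq_one, one_zpow]
  calc Nat.card {u : G // u ^ t = 1}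
      = Nat.card (Subgroup.zpowers ζ) := by
        apply Nat.card_congr
        exact Equiv.subtypeEquivRight (fun u => (step1 u).trans (step2 u))
    _ = d := by rw [Nat.card_zpowers, hoζ]


/-- Counting a subtype of a product fiberwise over the second factor. -/
lemma nat_card_prod_subtype {P γ : Type} [Finite P] [Fintype γ]
    (R : P → γ → Prop) :
    Nat.card {x : P × γ // R x.1 x.2} = ∑ g : γ, Nat.card {p : P // R p g} := by
  classical
  have e : {x : P × γ // R x.1 x.2} ≃ Σ g : γ, {p : P // R p g} :=
    ⟨fun x => ⟨x.1.2, ⟨x.1.1, x.2⟩⟩, fun s => ⟨(s.2.1, s.1), s.2.2⟩,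
      fun x => rfl, fun s => rfl⟩
  rw [Nat.card_congr e]
  letI : ∀ g : γ, Fintype {p : P // R p g} := fun g => Fintype.ofFinite _
  rw [Nat.card_eq_fintype_card, Fintype.card_sigma]
  exact Finset.sum_congr rfl fun g _ => (Nat.card_eq_fintype_card).symm

/-- Fibers of a group hom over range elements have the cardinality of the kernel. -/
lemma nat_card_fiber {P W : Type} [AddCommGroup P] [AddCommGroup W]
    (L : P →+ W) (w : W) (p₀ : P) (h : L p₀ = w) :
    Nat.card {p : P // L p = w} = Nat.card {p : P // L p = 0} := by
  refine Nat.card_congr ⟨fun p => ⟨p.1 - p₀, by rw [map_sub, p.2, h, sub_self]⟩,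
    fun k => ⟨k.1 + p₀, by rw [map_add, k.2, h, zero_add]⟩, ?_, ?_⟩
  · rintro ⟨p, hp⟩; apply Subtype.ext; simp
  · rintro ⟨k, hk⟩; apply Subtype.ext; simp

/-- Constant-fiber counting: the number of points whose image satisfies a predicate. -/
lemma nat_card_pred_comp {P W : Type} [AddCommGroup P] [AddCommGroup W]
    [Finite P] [Finite W] (L : P →+ W) (Pred : W → Prop) :
    Nat.card {p : P // Pred (L p)}
      = Nat.card {p : P // L p = 0} * Nat.card {w : W // Pred w ∧ w ∈ Set.range L} := by
  classical
  set β := {w : W // Pred w ∧ w ∈ Set.range L}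
  set α := {p : P // Pred (L p)}
  let f : α → β := fun p => ⟨L p.1, p.2, ⟨p.1, rfl⟩⟩
  have e1 : (Σ b : β, {a : α // f a = b}) ≃ α := Equiv.sigmaFiberEquiv f
  letI : Fintype β := Fintype.ofFinite _
  letI : ∀ b : β, Fintype {a : α // f a = b} := fun b => Fintype.ofFinite _
  have h1 : Nat.card α = ∑ b : β, Nat.card {a : α // f a = b} := by
    rw [← Nat.card_congr e1, Nat.card_eq_fintype_card, Fintype.card_sigma]
    exact Finset.sum_congr rfl fun b _ => (Nat.card_eq_fintype_card).symm
  have h2 : ∀ b : β, Nat.card {a : α // f a = b} = Nat.card {p : P // L p = 0} := by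
    intro b
    obtain ⟨w, ⟨hw, p₀, hp₀⟩⟩ := b
    have e2 : {a : α // f a = (⟨w, hw, p₀, hp₀⟩ : β)} ≃ {p : P // L p = w} := by
      refine ⟨fun a => ⟨a.1.1, ?_⟩, fun p => ⟨⟨p.1, by rw [p.2]; exact hw⟩, ?_⟩, ?_, ?_⟩
      · have := congrArg Subtype.val a.2
        exact this
      · apply Subtype.ext
        exact p.2
      · rintro ⟨⟨a, ha⟩, h⟩; rfl
      · rintro ⟨p, hp⟩; rfl
    rw [Nat.card_congr e2]
    exact nat_card_fiber L w p₀ hp₀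
  rw [h1, Finset.sum_congr rfl fun b _ => h2 b, Finset.sum_const, Finset.card_univ,
    smul_eq_mul, mul_comm, ← Nat.card_eq_fintype_card]


lemma exists_coprime_mul_modEq (n t t' : ℕ) (hn : 0 < n) (ht : 0 < t) (ht' : 0 < t')
    (h : Nat.gcd t n = Nat.gcd t' n) :
    ∃ k : ℕ, Nat.Coprime k n ∧ k * t ≡ t' [MOD n] := by
  set d := Nat.gcd t n with hd
  have hd0 : 0 < d := Nat.gcd_pos_of_pos_left n ht
  set m := n / d with hm
  have hdm : d * m = n := Nat.mul_div_cancel' (Nat.gcd_dvd_right t n)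
  have hm0 : 0 < m := by
    rcases Nat.eq_zero_or_pos m with h0 | h0
    · rw [h0, mul_zero] at hdm; omega
    · exact h0
  have hmn : m ∣ n := ⟨d, by rw [← hdm]; ring⟩
  set a := t / d with ha
  set a' := t' / d with ha'
  have hta : d * a = t := Nat.mul_div_cancel' (Nat.gcd_dvd_left t n)
  have hta' : d * a' = t' := by
    rw [ha', h]; exact Nat.mul_div_cancel' (Nat.gcd_dvd_left t' n)
  have hcopa : Nat.Coprime a m := Nat.coprime_div_gcd_div_gcd hd0
  have hcopa' : Nat.Coprime a' m := by
    have h0 : 0 < Nat.gcd t' n := by rw [← h]; exact hd0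
    have := Nat.coprime_div_gcd_div_gcd (m := t') (n := n) h0
    rwa [← h] at this
  haveI : NeZero m := ⟨hm0.ne'⟩
  haveI : NeZero n := ⟨hn.ne'⟩
  set u₀ : (ZMod m)ˣ := ZMod.unitOfCoprime a' hcopa' * (ZMod.unitOfCoprime a hcopa)⁻¹ with hu₀
  obtain ⟨u, hu⟩ := ZMod.unitsMap_surjective hmn u₀
  refine ⟨(u : ZMod n).val, ZMod.val_coe_unit_coprime u, ?_⟩
  set k := (u : ZMod n).val with hk
  -- reduce to mod m congruence
  have hmodm : k * a ≡ a' [MOD m] := by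
    rw [← ZMod.natCast_eq_natCast_iff]
    push_cast
    have h1 : ((k : ℕ) : ZMod m) = ((ZMod.unitsMap hmn u : (ZMod m)ˣ) : ZMod m) := by
      rw [hk, ZMod.natCast_val, ZMod.unitsMap]
      simp [ZMod.castHom_apply]
    rw [h1, hu, hu₀]
    have h2 : ((ZMod.unitOfCoprime a hcopa : (ZMod m)ˣ) : ZMod m) = (a : ZMod m) :=
      ZMod.coe_unitOfCoprime a hcopa
    have h3 : ((ZMod.unitOfCoprime a' hcopa' : (ZMod m)ˣ) : ZMod m) = (a' : ZMod m) :=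
      ZMod.coe_unitOfCoprime a' hcopa'
    rw [← h2, ← h3, ← Units.val_mul, inv_mul_cancel_right]
  have := hmodm.mul_left' (c := d)
  rw [hdm] at this
  calc k * t = d * (k * a) := by rw [← hta]; ring
    _ ≡ d * a' [MOD n] := this
    _ = t' := hta'
/-- The Laurent polynomial `A + B·x + C·x⁻¹ + D·z + E·x^s·y^t·z` from the
signature-(2,1) polytope `P^{(2,1)}(s,t)`, evaluated on `(Fˣ)³`. -/
def fP21 {F : Type} [Field F] (s t : ℕ) (A B C D E : F)
    (v : Fˣ × Fˣ × Fˣ) : F :=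
  A + B * (v.1 : F) + C * ((v.1⁻¹ : Fˣ) : F) + D * (v.2.2 : F) +
    E * (v.1 : F) ^ s * (v.2.1 : F) ^ t * (v.2.2 : F)

section Inner
open scoped Classical
variable {F : Type} [Field F]

/-- coefficient-coincidence condition for a pair of points -/
def Ecnd (t : ℕ) (v w : Fˣ × Fˣ × Fˣ) : Prop :=
  v.1 = w.1 ∧ v.2.2 = w.2.2 ∧ v.2.1 ^ t = w.2.1 ^ t

lemma card_single (s t : ℕ) (v : Fˣ × Fˣ × Fˣ) :
    Nat.card {p : F × F × F × F × F //
      fP21 s t p.1 p.2.1 p.2.2.1 p.2.2.2.1 p.2.2.2.2 v = 0} = Nat.card (F × F × F × F) := by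
  obtain ⟨x, y, z⟩ := v
  rw [← card_solve_first' (fun q : F × F × F × F =>
      q.1 * (x : F) + q.2.1 * ((x⁻¹ : Fˣ) : F) + q.2.2.1 * (z : F)
        + q.2.2.2 * ((x : F) ^ s * (y : F) ^ t * (z : F)))]
  refine Nat.card_congr (Equiv.subtypeEquivRight ?_)
  intro p
  simp only [fP21]
  constructor <;> intro hh <;> linear_combination hh

lemma inner_count (s t : ℕ) (v w : Fˣ × Fˣ × Fˣ) :
    Nat.card {p : F × F × F × F × F //
      fP21 s t p.1 p.2.1 p.2.2.1 p.2.2.2.1 p.2.2.2.2 v = 0 ∧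
      fP21 s t p.1 p.2.1 p.2.2.1 p.2.2.2.1 p.2.2.2.2 w = 0}
      = if Ecnd t v w then Nat.card (F × F × F × F) else Nat.card (F × F × F) := by
  obtain ⟨x, y, z⟩ := v
  obtain ⟨x', y', z'⟩ := w
  by_cases h : Ecnd t (x, y, z) (x', y', z')
  · rw [if_pos h]
    obtain ⟨h1, h2, h3⟩ := h
    simp only at h1 h2 h3
    subst h1; subst h2
    have hy : ((y : F)) ^ t = ((y' : F)) ^ t := by
      rw [← Units.val_pow_eq_pow_val, ← Units.val_pow_eq_pow_val, h3]
    have hsame : ∀ p : F × F × F × F × F,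
        fP21 s t p.1 p.2.1 p.2.2.1 p.2.2.2.1 p.2.2.2.2 (x, y', z)
          = fP21 s t p.1 p.2.1 p.2.2.1 p.2.2.2.1 p.2.2.2.2 (x, y, z) := by
      intro p
      simp only [fP21]
      rw [← hy]
    rw [← card_single s t (x, y, z)]
    refine Nat.card_congr (Equiv.subtypeEquivRight ?_)
    intro p
    rw [hsame p]
    exact ⟨fun hh => hh.1, fun hh => ⟨hh, hh⟩⟩
  · rw [if_neg h]
    -- reduce to a difference equation in the last four variables
    have step1 : Nat.card {p : F × F × F × F × F //
        fP21 s t p.1 p.2.1 p.2.2.1 p.2.2.2.1 p.2.2.2.2 (x, y, z) = 0 ∧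
        fP21 s t p.1 p.2.1 p.2.2.1 p.2.2.2.1 p.2.2.2.2 (x', y', z') = 0}
        = Nat.card {q : F × F × F × F //
            ((x' : F) - (x : F)) * q.1 + (((x'⁻¹ : Fˣ) : F) - ((x⁻¹ : Fˣ) : F)) * q.2.1
              + ((z' : F) - (z : F)) * q.2.2.1
              + ((x' : F) ^ s * (y' : F) ^ t * (z' : F)
                  - (x : F) ^ s * (y : F) ^ t * (z : F)) * q.2.2.2 = 0} := by
      rw [← card_solve_first (fun q : F × F × F × F =>
          q.1 * (x : F) + q.2.1 * ((x⁻¹ : Fˣ) : F) + q.2.2.1 * (z : F)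
            + q.2.2.2 * ((x : F) ^ s * (y : F) ^ t * (z : F)))
        (fun q : F × F × F × F =>
          ((x' : F) - (x : F)) * q.1 + (((x'⁻¹ : Fˣ) : F) - ((x⁻¹ : Fˣ) : F)) * q.2.1
            + ((z' : F) - (z : F)) * q.2.2.1
            + ((x' : F) ^ s * (y' : F) ^ t * (z' : F)
                - (x : F) ^ s * (y : F) ^ t * (z : F)) * q.2.2.2 = 0)]
      refine Nat.card_congr (Equiv.subtypeEquivRight ?_)
      intro p
      simp only [fP21]
      constructor <;> intro hh
      · exact ⟨by linear_combination hh.1, by linear_combination hh.2 - hh.1⟩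
      · exact ⟨by linear_combination hh.1, by linear_combination hh.1 + hh.2⟩
    rw [step1]
    apply card_lin4
    rintro ⟨ha, hb, hc, he⟩
    apply h
    have hxu : x = x' := Units.ext (by linear_combination -ha)
    have hzu : z = z' := Units.ext (by linear_combination -hc)
    subst hxu; subst hzu
    refine ⟨rfl, rfl, ?_⟩
    have hne1 : (x : F) ^ s ≠ 0 := pow_ne_zero _ (Units.ne_zero x)
    have hne2 : (z : F) ≠ 0 := Units.ne_zero z
    have hm : (x : F) ^ s * (z : F) * ((y' : F) ^ t - (y : F) ^ t) = 0 := by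
      linear_combination he
    rcases mul_eq_zero.mp hm with hm1 | hm2
    · rcases mul_eq_zero.mp hm1 with hh | hh
      · exact absurd hh hne1
      · exact absurd hh hne2
    · have : (y : F) ^ t = (y' : F) ^ t := by linear_combination -hm2
      apply Units.ext
      rw [Units.val_pow_eq_pow_val, Units.val_pow_eq_pow_val]
      exact this
end Inner

/-- The toric code `C_{P^{(2,1)}(s,t)}`. -/
def toricCodeP21 (F : Type) [Field F] (s t : ℕ) : Set (Fˣ × Fˣ × Fˣ → F) :=
  {w | ∃ A B C D E : F, w = fP21 s t A B C D E}


section Lhom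
variable {F : Type} [Field F]

def Lhom (s t : ℕ) : (F × F × F × F × F) →+ ((Fˣ × Fˣ × Fˣ) → F) where
  toFun p := fP21 s t p.1 p.2.1 p.2.2.1 p.2.2.2.1 p.2.2.2.2
  map_zero' := by funext v; simp [fP21]
  map_add' p q := by funext v; simp only [fP21, Prod.fst_add, Prod.snd_add, Pi.add_apply]; ring

lemma Lhom_apply (s t : ℕ) (p : F × F × F × F × F) :
    Lhom s t p = fP21 s t p.1 p.2.1 p.2.2.1 p.2.2.2.1 p.2.2.2.2 := rfl

lemma Lhom_range (s t : ℕ) : Set.range (Lhom (F := F) s t) = toricCodeP21 F s t := by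
  ext w
  constructor
  · rintro ⟨p, rfl⟩
    exact ⟨p.1, p.2.1, p.2.2.1, p.2.2.2.1, p.2.2.2.2, rfl⟩
  · rintro ⟨A, B, C, D, E, rfl⟩
    exact ⟨(A, B, C, D, E), rfl⟩

end Lhom

section EcndCard
open scoped Classical

variable {F : Type} [Field F]

lemma card_diag {α : Type} : Nat.card {p : α × α // p.1 = p.2} = Nat.card α := by
  refine Nat.card_congr ⟨fun p => p.1.1, fun a => ⟨(a, a), rfl⟩, ?_, fun a => rfl⟩
  rintro ⟨⟨a, b⟩, h⟩
  simp only at h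
  subst h
  rfl

lemma card_pow_pair {G : Type} [CommGroup G] (t : ℕ) :
    Nat.card {p : G × G // p.1 ^ t = p.2 ^ t} = Nat.card G * Nat.card {u : G // u ^ t = 1} := by
  rw [← Nat.card_prod]
  refine Nat.card_congr ⟨fun p => (p.1.1, ⟨p.1.2 * p.1.1⁻¹, ?_⟩),
    fun x => ⟨(x.1, x.2.1 * x.1), by rw [mul_pow, x.2.2, one_mul]⟩, ?_, ?_⟩
  · rw [mul_pow, inv_pow, ← p.2, mul_inv_cancel]
  · rintro ⟨⟨a, b⟩, h⟩
    apply Subtype.ext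
    simp
  · rintro ⟨a, ⟨u, hu⟩⟩
    ext : 1
    · rfl
    · apply Subtype.ext
      simp
end EcndCard

section EcndCard2
variable {F : Type} [Field F]

lemma card_Ecnd (t : ℕ) :
    Nat.card {vw : (Fˣ × Fˣ × Fˣ) × (Fˣ × Fˣ × Fˣ) // Ecnd t vw.1 vw.2}
      = (Nat.card Fˣ) * ((Nat.card Fˣ * Nat.card {u : Fˣ // u ^ t = 1}) * Nat.card Fˣ) := by
  have e : {vw : (Fˣ × Fˣ × Fˣ) × (Fˣ × Fˣ × Fˣ) // Ecnd t vw.1 vw.2}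
      ≃ {p : Fˣ × Fˣ // p.1 = p.2} × {p : Fˣ × Fˣ // p.1 ^ t = p.2 ^ t}
          × {p : Fˣ × Fˣ // p.1 = p.2} := by
    refine ⟨fun x => (⟨(x.1.1.1, x.1.2.1), x.2.1⟩, ⟨(x.1.1.2.1, x.1.2.2.1), x.2.2.2⟩,
      ⟨(x.1.1.2.2, x.1.2.2.2), x.2.2.1⟩),
      fun x => ⟨((x.1.1.1, x.2.1.1.1, x.2.2.1.1), (x.1.1.2, x.2.1.1.2, x.2.2.1.2)),
        x.1.2, x.2.2.2, x.2.1.2⟩, ?_, ?_⟩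
    · rintro ⟨⟨⟨a, b, c⟩, ⟨a', b', c'⟩⟩, h⟩; rfl
    · rintro ⟨⟨⟨a, a'⟩, h1⟩, ⟨⟨b, b'⟩, h2⟩, ⟨⟨c, c'⟩, h3⟩⟩; rfl
  rw [Nat.card_congr e, Nat.card_prod, Nat.card_prod, card_diag, card_pow_pair]
end EcndCard2

/-- Monomial equivalence of two codes indexed by `(Fˣ)³`: there is a
permutation `π` of the index set and a nonzero scalar `lam v` for each index
`v` such that `C₂ = { v ↦ lam v * c (π v) : c ∈ C₁ }`. -/
def MonomiallyEquiv {F : Type} [Field F]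
    (C₁ C₂ : Set (Fˣ × Fˣ × Fˣ → F)) : Prop :=
  ∃ (π : Equiv.Perm (Fˣ × Fˣ × Fˣ)) (lam : Fˣ × Fˣ × Fˣ → Fˣ),
    C₂ = {w | ∃ c ∈ C₁, w = fun v => (lam v : F) * c (π v)}

lemma reverse_dir {F : Type} [Field F] [Finite Fˣ] (s t t' k : ℕ)
    (hk : Nat.Coprime k (Nat.card Fˣ)) (hmod : k * t ≡ t' [MOD Nat.card Fˣ]) :
    MonomiallyEquiv (toricCodeP21 F s t) (toricCodeP21 F s t') := by
  have hpow : ∀ y : Fˣ, (y ^ k) ^ t = y ^ t' := by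
    intro y
    rw [← pow_mul]
    exact pow_eq_pow_iff_modEq.mpr (hmod.of_dvd (orderOf_dvd_natCard y))
  have hσ : (Nat.card Fˣ).Coprime k := hk.symm
  set σ : Fˣ ≃ Fˣ := powCoprime hσ with hσdef
  have hσapp : ∀ y : Fˣ, σ y = y ^ k := fun y => rfl
  refine ⟨(Equiv.refl Fˣ).prodCongr (σ.prodCongr (Equiv.refl Fˣ)), fun _ => 1, ?_⟩
  have key : ∀ (A B C D E : F) (v : Fˣ × Fˣ × Fˣ),
      fP21 s t A B C D E ((Equiv.refl Fˣ).prodCongr (σ.prodCongr (Equiv.refl Fˣ)) v)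
        = fP21 s t' A B C D E v := by
    intro A B C D E v
    obtain ⟨x, y, z⟩ := v
    simp only [Equiv.prodCongr_apply, Equiv.coe_refl, Prod.map, id_eq, fP21, hσapp]
    have : ((y ^ k : Fˣ) : F) ^ t = ((y : Fˣ) : F) ^ t' := by
      rw [← Units.val_pow_eq_pow_val, ← Units.val_pow_eq_pow_val, hpow]
    rw [this]
  ext w
  constructor
  · rintro ⟨A, B, C, D, E, rfl⟩
    refine ⟨fP21 s t A B C D E, ⟨A, B, C, D, E, rfl⟩, ?_⟩
    funext v
    rw [key A B C D E v]
    simp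
  · rintro ⟨c, ⟨A, B, C, D, E, rfl⟩, rfl⟩
    refine ⟨A, B, C, D, E, ?_⟩
    funext v
    rw [← key A B C D E v]
    simp
open scoped Classical

section NCompute
variable {F : Type} [Field F] [Fintype F]

lemma N_compute (s τ : ℕ) :
    Nat.card {x : (F × F × F × F × F) × ((Fˣ × Fˣ × Fˣ) × (Fˣ × Fˣ × Fˣ)) //
        Lhom s τ x.1 x.2.1 = 0 ∧ Lhom s τ x.1 x.2.2 = 0}
      = Nat.card (F × F × F × F) * Nat.card {vw : (Fˣ × Fˣ × Fˣ) × (Fˣ × Fˣ × Fˣ) // Ecnd τ vw.1 vw.2}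
        + Nat.card (F × F × F) *
            (Nat.card ((Fˣ × Fˣ × Fˣ) × (Fˣ × Fˣ × Fˣ))
              - Nat.card {vw : (Fˣ × Fˣ × Fˣ) × (Fˣ × Fˣ × Fˣ) // Ecnd τ vw.1 vw.2}) := by
  classical
  have step1 : Nat.card {x : (F × F × F × F × F) × ((Fˣ × Fˣ × Fˣ) × (Fˣ × Fˣ × Fˣ)) //
        Lhom s τ x.1 x.2.1 = 0 ∧ Lhom s τ x.1 x.2.2 = 0}
      = ∑ vw : (Fˣ × Fˣ × Fˣ) × (Fˣ × Fˣ × Fˣ),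
          Nat.card {p : F × F × F × F × F // Lhom s τ p vw.1 = 0 ∧ Lhom s τ p vw.2 = 0} :=
    nat_card_prod_subtype
      (fun (p : F × F × F × F × F) (vw : (Fˣ × Fˣ × Fˣ) × (Fˣ × Fˣ × Fˣ)) =>
        Lhom s τ p vw.1 = 0 ∧ Lhom s τ p vw.2 = 0)
  have step2 : ∀ vw : (Fˣ × Fˣ × Fˣ) × (Fˣ × Fˣ × Fˣ),
      Nat.card {p : F × F × F × F × F // Lhom s τ p vw.1 = 0 ∧ Lhom s τ p vw.2 = 0}
        = if Ecnd τ vw.1 vw.2 then Nat.card (F × F × F × F) else Nat.card (F × F × F) :=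
    fun vw => inner_count s τ vw.1 vw.2
  rw [step1, Finset.sum_congr rfl fun vw _ => step2 vw, Finset.sum_ite, Finset.sum_const,
    Finset.sum_const, smul_eq_mul, smul_eq_mul]
  have hB : (Finset.univ.filter fun vw : (Fˣ × Fˣ × Fˣ) × (Fˣ × Fˣ × Fˣ) =>
      Ecnd τ vw.1 vw.2).card = Nat.card {vw : (Fˣ × Fˣ × Fˣ) × (Fˣ × Fˣ × Fˣ) // Ecnd τ vw.1 vw.2} := by
    rw [Nat.card_eq_fintype_card, Fintype.card_subtype]
  have hBn : (Finset.univ.filter fun vw : (Fˣ × Fˣ × Fˣ) × (Fˣ × Fˣ × Fˣ) =>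
      ¬ Ecnd τ vw.1 vw.2).card
      = Nat.card ((Fˣ × Fˣ × Fˣ) × (Fˣ × Fˣ × Fˣ))
        - Nat.card {vw : (Fˣ × Fˣ × Fˣ) × (Fˣ × Fˣ × Fˣ) // Ecnd τ vw.1 vw.2} := by
    have h := Finset.card_filter_add_card_filter_not
      (s := (Finset.univ : Finset ((Fˣ × Fˣ × Fˣ) × (Fˣ × Fˣ × Fˣ))))
      (p := fun vw => Ecnd τ vw.1 vw.2)
    rw [Finset.card_univ, ← Nat.card_eq_fintype_card] at h
    omega
  rw [hB, hBn]
  ring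

lemma card_subtype_le' {α : Type} [Finite α] (p : α → Prop) :
    Nat.card {a : α // p a} ≤ Nat.card α :=
  Nat.card_le_card_of_injective _ Subtype.val_injective

lemma arith_cancel (q3 q4 U a b : ℕ) (h3 : q3 < q4) (ha : a ≤ U) (hb : b ≤ U)
    (h : q4 * a + q3 * (U - a) = q4 * b + q3 * (U - b)) : a = b := by
  have h' : ((q4 : ℤ) - q3) * ((a : ℤ) - b) = 0 := by
    zify [ha, hb] at h
    linear_combination h
  rcases mul_eq_zero.mp h' with h0 | h0
  · exfalso
    have : (q3 : ℤ) < q4 := by exact_mod_cast h3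
    omega
  · have : (a : ℤ) = b := by omega
    exact_mod_cast this

end NCompute


section Forward
variable {F : Type} [Field F] [Fintype F]

lemma forward_dir (s t t' : ℕ)
    (h : MonomiallyEquiv (toricCodeP21 F s t) (toricCodeP21 F s t')) :
    Nat.gcd t (Nat.card Fˣ) = Nat.gcd t' (Nat.card Fˣ) := by
  classical
  obtain ⟨π, lam, hC⟩ := h
  set Φ : ((Fˣ × Fˣ × Fˣ) → F) → ((Fˣ × Fˣ × Fˣ) → F) :=
    fun c v => (lam v : F) * c (π v) with hΦ
  have hΦinj : Function.Injective Φ := by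
    intro c c' hcc
    funext u
    have h1 := congrFun hcc (π.symm u)
    simp only [hΦ] at h1
    have h2 := mul_left_cancel₀ (Units.ne_zero (lam (π.symm u))) h1
    rwa [Equiv.apply_symm_apply] at h2
  have him : toricCodeP21 F s t' = Φ '' toricCodeP21 F s t := by
    rw [hC]
    ext w
    simp only [Set.mem_setOf_eq, Set.mem_image]
    constructor
    · rintro ⟨c, h1, rfl⟩; exact ⟨c, h1, rfl⟩
    · rintro ⟨c, h1, rfl⟩; exact ⟨c, h1, rfl⟩
  have hcard : Nat.card ↥(toricCodeP21 F s t') = Nat.card ↥(toricCodeP21 F s t) := by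
    rw [him]
    exact Nat.card_image_of_injective hΦinj _
  -- code triple counts
  set NCt := Nat.card {x : ((Fˣ × Fˣ × Fˣ) → F) × ((Fˣ × Fˣ × Fˣ) × (Fˣ × Fˣ × Fˣ)) //
      x.1 ∈ toricCodeP21 F s t ∧ x.1 x.2.1 = 0 ∧ x.1 x.2.2 = 0} with hNCt
  set NCt' := Nat.card {x : ((Fˣ × Fˣ × Fˣ) → F) × ((Fˣ × Fˣ × Fˣ) × (Fˣ × Fˣ × Fˣ)) //
      x.1 ∈ toricCodeP21 F s t' ∧ x.1 x.2.1 = 0 ∧ x.1 x.2.2 = 0} with hNCt'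
  have hNC : NCt' = NCt := by
    rw [hNCt, hNCt']
    symm
    apply Nat.card_congr
    have hmem : ∀ c, c ∈ toricCodeP21 F s t → Φ c ∈ toricCodeP21 F s t' := by
      intro c hc
      rw [him]
      exact Set.mem_image_of_mem Φ hc
    have hzeroPhi : ∀ (c : (Fˣ × Fˣ × Fˣ) → F) (v : Fˣ × Fˣ × Fˣ),
        c v = 0 → Φ c (π.symm v) = 0 := by
      intro c v hv
      show (lam (π.symm v) : F) * c (π (π.symm v)) = 0
      rw [Equiv.apply_symm_apply, hv, mul_zero]
    refine Equiv.ofBijective (fun x => ⟨(Φ x.1.1, (π.symm x.1.2.1, π.symm x.1.2.2)),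
      hmem _ x.2.1, hzeroPhi _ _ x.2.2.1, hzeroPhi _ _ x.2.2.2⟩) ⟨?_, ?_⟩
    · intro a b hab
      have h1 : Φ a.1.1 = Φ b.1.1 := congrArg (fun y => y.val.1) hab
      have h2 : π.symm a.1.2.1 = π.symm b.1.2.1 := congrArg (fun y => y.val.2.1) hab
      have h3 : π.symm a.1.2.2 = π.symm b.1.2.2 := congrArg (fun y => y.val.2.2) hab
      apply Subtype.ext
      apply Prod.ext
      · exact hΦinj h1
      · exact Prod.ext (π.symm.injective h2) (π.symm.injective h3)
    · rintro ⟨⟨f, vw⟩, hf, h1, h2⟩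
      simp only at hf h1 h2
      rw [him] at hf
      obtain ⟨c, hc, hΦc⟩ := hf
      have hzero : ∀ v : Fˣ × Fˣ × Fˣ, f v = 0 → c (π v) = 0 := by
        intro v hv
        rw [← hΦc] at hv
        have hv' : (lam v : F) * c (π v) = 0 := hv
        rcases mul_eq_zero.mp hv' with h0 | h0
        · exact absurd h0 (Units.ne_zero _)
        · exact h0
      refine ⟨⟨(c, (π vw.1, π vw.2)), hc, hzero _ h1, hzero _ h2⟩, ?_⟩
      apply Subtype.ext
      apply Prod.ext
      · exact hΦc
      · exact Prod.ext (π.symm_apply_apply _) (π.symm_apply_apply _)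
  -- kernel sizes
  set Kt := Nat.card {p : F × F × F × F × F // Lhom s t p = 0} with hKtdef
  set Kt' := Nat.card {p : F × F × F × F × F // Lhom s t' p = 0} with hKtdef'
  have hQ5 : ∀ τ : ℕ, Nat.card (F × F × F × F × F)
      = Nat.card {p : F × F × F × F × F // Lhom (F := F) s τ p = 0}
          * Nat.card ↥(toricCodeP21 F s τ) := by
    intro τ
    have h0 := nat_card_pred_comp (Lhom (F := F) s τ) (fun _ => True)
    simp only [true_and] at h0
    calc Nat.card (F × F × F × F × F)
        = Nat.card {p : F × F × F × F × F // True} :=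
          (Nat.card_congr (Equiv.subtypeUnivEquiv fun _ => trivial)).symm
      _ = Nat.card {p : F × F × F × F × F // Lhom (F := F) s τ p = 0}
            * Nat.card {w : (Fˣ × Fˣ × Fˣ) → F // w ∈ Set.range (Lhom (F := F) s τ)} := h0
      _ = _ := by
          congr 1
          apply Nat.card_congr
          apply Equiv.subtypeEquivRight
          intro w
          rw [Lhom_range]
  have hpos : 0 < Nat.card ↥(toricCodeP21 F s t) :=
    @Nat.card_pos _ ⟨⟨fP21 s t 0 0 0 0 0, 0, 0, 0, 0, 0, rfl⟩⟩ _
  have hK : Kt = Kt' := by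
    apply Nat.eq_of_mul_eq_mul_right hpos
    rw [← hQ5 t]
    rw [← hcard, ← hQ5 t']
  -- parameter triple counts
  set Nt := Nat.card {x : (F × F × F × F × F) × ((Fˣ × Fˣ × Fˣ) × (Fˣ × Fˣ × Fˣ)) //
      Lhom s t x.1 x.2.1 = 0 ∧ Lhom s t x.1 x.2.2 = 0} with hNtdef
  set Nt' := Nat.card {x : (F × F × F × F × F) × ((Fˣ × Fˣ × Fˣ) × (Fˣ × Fˣ × Fˣ)) //
      Lhom s t' x.1 x.2.1 = 0 ∧ Lhom s t' x.1 x.2.2 = 0} with hNtdef'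
  have hNKC : ∀ τ : ℕ, Nat.card {x : (F × F × F × F × F) × ((Fˣ × Fˣ × Fˣ) × (Fˣ × Fˣ × Fˣ)) //
      Lhom s τ x.1 x.2.1 = 0 ∧ Lhom s τ x.1 x.2.2 = 0}
      = Nat.card {p : F × F × F × F × F // Lhom (F := F) s τ p = 0}
        * Nat.card {x : ((Fˣ × Fˣ × Fˣ) → F) × ((Fˣ × Fˣ × Fˣ) × (Fˣ × Fˣ × Fˣ)) //
            x.1 ∈ toricCodeP21 F s τ ∧ x.1 x.2.1 = 0 ∧ x.1 x.2.2 = 0} := by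
    intro τ
    have step1 : Nat.card {x : (F × F × F × F × F) × ((Fˣ × Fˣ × Fˣ) × (Fˣ × Fˣ × Fˣ)) //
        Lhom s τ x.1 x.2.1 = 0 ∧ Lhom s τ x.1 x.2.2 = 0}
        = ∑ vw : (Fˣ × Fˣ × Fˣ) × (Fˣ × Fˣ × Fˣ),
            Nat.card {p : F × F × F × F × F // Lhom s τ p vw.1 = 0 ∧ Lhom s τ p vw.2 = 0} :=
      nat_card_prod_subtype
        (fun (p : F × F × F × F × F) (vw : (Fˣ × Fˣ × Fˣ) × (Fˣ × Fˣ × Fˣ)) =>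
          Lhom s τ p vw.1 = 0 ∧ Lhom s τ p vw.2 = 0)
    have step2 : ∀ vw : (Fˣ × Fˣ × Fˣ) × (Fˣ × Fˣ × Fˣ),
        Nat.card {p : F × F × F × F × F // Lhom s τ p vw.1 = 0 ∧ Lhom s τ p vw.2 = 0}
          = Nat.card {p : F × F × F × F × F // Lhom (F := F) s τ p = 0}
            * Nat.card {f : (Fˣ × Fˣ × Fˣ) → F //
                f ∈ toricCodeP21 F s τ ∧ f vw.1 = 0 ∧ f vw.2 = 0} := by
      intro vw
      have h0 := nat_card_pred_comp (Lhom (F := F) s τ)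
        (fun f => f vw.1 = 0 ∧ f vw.2 = 0)
      rw [h0]
      congr 1
      apply Nat.card_congr
      apply Equiv.subtypeEquivRight
      intro f
      rw [Lhom_range]
      tauto
    have step3 : Nat.card {x : ((Fˣ × Fˣ × Fˣ) → F) × ((Fˣ × Fˣ × Fˣ) × (Fˣ × Fˣ × Fˣ)) //
        x.1 ∈ toricCodeP21 F s τ ∧ x.1 x.2.1 = 0 ∧ x.1 x.2.2 = 0}
        = ∑ vw : (Fˣ × Fˣ × Fˣ) × (Fˣ × Fˣ × Fˣ),
            Nat.card {f : (Fˣ × Fˣ × Fˣ) → F //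
              f ∈ toricCodeP21 F s τ ∧ f vw.1 = 0 ∧ f vw.2 = 0} :=
      nat_card_prod_subtype
        (fun (f : (Fˣ × Fˣ × Fˣ) → F) (vw : (Fˣ × Fˣ × Fˣ) × (Fˣ × Fˣ × Fˣ)) =>
          f ∈ toricCodeP21 F s τ ∧ f vw.1 = 0 ∧ f vw.2 = 0)
    rw [step1, Finset.sum_congr rfl fun vw _ => step2 vw, ← Finset.mul_sum, step3]
  have hNN : Nt = Nt' := by
    rw [hNtdef, hNtdef', hNKC t, hNKC t', ← hNCt, ← hNCt', ← hKtdef, ← hKtdef', hK, hNC]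
  -- evaluate both sides
  have hq2 : 1 < Nat.card F := by
    rw [Nat.card_eq_fintype_card]
    exact Fintype.one_lt_card
  have hc34 : Nat.card (F × F × F) < Nat.card (F × F × F × F) := by
    rw [Nat.card_prod, Nat.card_prod, Nat.card_prod, Nat.card_prod, Nat.card_prod]
    have hpos3 : 0 < Nat.card F * (Nat.card F * Nat.card F) := by positivity
    nlinarith
  have hB := arith_cancel (Nat.card (F × F × F)) (Nat.card (F × F × F × F))
    (Nat.card ((Fˣ × Fˣ × Fˣ) × (Fˣ × Fˣ × Fˣ)))
    (Nat.card {vw : (Fˣ × Fˣ × Fˣ) × (Fˣ × Fˣ × Fˣ) // Ecnd t vw.1 vw.2})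
    (Nat.card {vw : (Fˣ × Fˣ × Fˣ) × (Fˣ × Fˣ × Fˣ) // Ecnd t' vw.1 vw.2})
    hc34 (card_subtype_le' _) (card_subtype_le' _)
    (by rw [← N_compute s t, ← N_compute s t']; exact hNN)
  -- extract the gcd
  have hn0 : 0 < Nat.card Fˣ := Nat.card_pos
  rw [card_Ecnd, card_Ecnd] at hB
  have h1 := Nat.eq_of_mul_eq_mul_left hn0 hB
  have h2 := Nat.eq_of_mul_eq_mul_right hn0 h1
  have h3 := Nat.eq_of_mul_eq_mul_left hn0 h2
  rw [card_pow_eq_one, card_pow_eq_one] at h3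
  exact h3
end Forward

/-- `C_{P^{(2,1)}(s,t)}` and `C_{P^{(2,1)}(s,t')}` are monomially equivalent
iff `gcd(t, q−1) = gcd(t', q−1)`. -/
theorem stmt16 (F : Type) [Field F] [Fintype F] (s t t' : ℕ)
    (hq : 2 < Fintype.card F) (ht : 1 ≤ t) (ht' : 1 ≤ t')
    (hst : Nat.gcd s t = 1) (hst' : Nat.gcd s t' = 1) :
    MonomiallyEquiv (toricCodeP21 F s t) (toricCodeP21 F s t') ↔
      Nat.gcd t (Fintype.card F - 1) = Nat.gcd t' (Fintype.card F - 1) := by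
  classical
  have hn : Nat.card Fˣ = Fintype.card F - 1 := by
    rw [Nat.card_eq_fintype_card, Fintype.card_units]
  constructor
  · intro h
    have h2 := forward_dir s t t' h
    rwa [hn] at h2
  · intro h
    have hn0 : 0 < Nat.card Fˣ := Nat.card_pos
    obtain ⟨k, hk, hmod⟩ := exists_coprime_mul_modEq (Nat.card Fˣ) t t' hn0 ht ht'
      (by rw [hn]; exact h)
    exact reverse_dir s t t' k hk hmod
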